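/- For k, l ≥ 2, the theta graph Θ(2, 2k+1, 2l+1) is of non-QE class: the function f supported on vertices y_1, z_{2l}, y_{k+1}, z_l, y_{k+2}, z_{l−1}, x_1 with values u_1 = 2k+2l−4 (at y_1 and z_{2l}), u_2 = 11−4k−4l (at y_{k+1} and z_l), u_3 = 4k+4l−13 (at y_{k+2} and z_{l−1}), u_4 = −2u_1−2u_2−2u_3 (at x_1) has zero sum and satisfies Σ_{x,y} d(x,y) f(x) f(y) = 2(4k+4l−13) > 0. -/

import Mathlib

/-- The vertex set of the theta graph `Θ(a,b,c)`: two endpoints `s`, `t` together with the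
internal vertices `x_1,…,x_{a-1}`, `y_1,…,y_{b-1}`, `z_1,…,z_{c-1}` of the three paths
(`x i` stands for `x_{i+1}`, etc.). -/
inductive ThetaV (a b c : ℕ) : Type
  | s : ThetaV a b c
  | t : ThetaV a b c
  | x : Fin (a - 1) → ThetaV a b c
  | y : Fin (b - 1) → ThetaV a b c
  | z : Fin (c - 1) → ThetaV a b c
deriving DecidableEq, Fintype

/-- Generating relation for the edges of the theta graph `Θ(a,b,c)`. -/
def thetaRel (a b c : ℕ) : ThetaV a b c → ThetaV a b c → Prop
  | .s, .t => a = 1 ∨ b = 1 ∨ c = 1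
  | .s, .x i => (i : ℕ) = 0
  | .s, .y i => (i : ℕ) = 0
  | .s, .z i => (i : ℕ) = 0
  | .t, .x i => (i : ℕ) = a - 2
  | .t, .y i => (i : ℕ) = b - 2
  | .t, .z i => (i : ℕ) = c - 2
  | .x i, .x j => (j : ℕ) = (i : ℕ) + 1
  | .y i, .y j => (j : ℕ) = (i : ℕ) + 1
  | .z i, .z j => (j : ℕ) = (i : ℕ) + 1
  | _, _ => False

/-- The theta graph `Θ(a,b,c)`: three internally disjoint paths of lengths `a`, `b`, `c`
joining the two common endpoints `s` and `t`. -/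
def thetaGraph (a b c : ℕ) : SimpleGraph (ThetaV a b c) :=
  SimpleGraph.fromRel (thetaRel a b c)

/-- A Tanaka quintuple in a graph `G`. -/
def TanakaQuintuple {V : Type*} (G : SimpleGraph V) (v1 v2 v3 v4 v5 : V) : Prop :=
  G.Adj v1 v2 ∧ G.Adj v3 v4 ∧
  G.dist v1 v3 = G.dist v2 v4 ∧
  G.dist v1 v4 = G.dist v1 v3 + 1 ∧
  G.dist v2 v3 = G.dist v1 v3 + 1 ∧
  G.dist v5 v2 = G.dist v5 v1 + 1 ∧
  G.dist v5 v3 = G.dist v5 v4 + 1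

namespace Stmt18A

abbrev TV (k l : ℕ) := ThetaV 2 (2*k+1) (2*l+1)
abbrev TG (k l : ℕ) := thetaGraph 2 (2*k+1) (2*l+1)

def isx {k l : ℕ} : TV k l → Bool
  | .x _ => true
  | _ => false

def tpos (k l : ℕ) : TV k l → ℕ
  | .s => 0
  | .t => 2*k+1
  | .x _ => 0
  | .y i => (i : ℕ) + 1
  | .z j => 2*k+2*l+1 - (j : ℕ)

def cyc (k l p q : ℕ) : ℕ :=
  min ((p-q)+(q-p)) ((2*k+2*l+2) - ((p-q)+(q-p)))

def cd (k l p q : ℕ) : ℕ :=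
  min (cyc k l p q) (min (cyc k l p 0 + 2 + cyc k l (2*k+1) q)
    (cyc k l p (2*k+1) + 2 + cyc k l 0 q))

def xd (k l q : ℕ) : ℕ :=
  1 + min (cyc k l 0 q) (cyc k l (2*k+1) q)

def DD (k l : ℕ) (v w : TV k l) : ℕ :=
  if isx v && isx w then 0
  else if isx v then xd k l (tpos k l w)
  else if isx w then xd k l (tpos k l v)
  else cd k l (tpos k l v) (tpos k l w)

lemma DD_self (k l : ℕ) (v : TV k l) : DD k l v v = 0 := by
  cases v <;> simp [DD, isx, cd, cyc, xd, tpos]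

lemma cyc_self (k l p : ℕ) : cyc k l p p = 0 := by unfold cyc; omega

lemma cyc_lip (k l p p' q : ℕ) (hq : q ≤ 2*k+2*l+1) (hp : p ≤ 2*k+2*l+1) (hp' : p' ≤ 2*k+2*l+1)
    (h : p+1 = p' ∨ p'+1 = p ∨ (p = 0 ∧ p' = 2*k+2*l+1) ∨ (p' = 0 ∧ p = 2*k+2*l+1)) :
    cyc k l p q ≤ cyc k l p' q + 1 := by
  unfold cyc; omega

lemma cd_lip (k l p p' q : ℕ) (hq : q ≤ 2*k+2*l+1) (hp : p ≤ 2*k+2*l+1) (hp' : p' ≤ 2*k+2*l+1)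
    (h : p+1 = p' ∨ p'+1 = p ∨ (p = 0 ∧ p' = 2*k+2*l+1) ∨ (p' = 0 ∧ p = 2*k+2*l+1)) :
    cd k l p q ≤ cd k l p' q + 1 := by
  have h1 := cyc_lip k l p p' q hq hp hp' h
  have h2 := cyc_lip k l p p' 0 (by omega) hp hp' h
  have h3 := cyc_lip k l p p' (2*k+1) (by omega) hp hp' h
  unfold cd; omega

lemma xd_lip (k l p p' : ℕ) (hp : p ≤ 2*k+2*l+1) (hp' : p' ≤ 2*k+2*l+1)
    (h : p+1 = p' ∨ p'+1 = p ∨ (p = 0 ∧ p' = 2*k+2*l+1) ∨ (p' = 0 ∧ p = 2*k+2*l+1)) :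
    xd k l p ≤ xd k l p' + 1 := by
  have hc : ∀ a b q : ℕ, cyc a b q 0 = cyc a b 0 q := by intro a b q; unfold cyc; omega
  have hd : ∀ a b q : ℕ, cyc a b q (2*a+1) = cyc a b (2*a+1) q := by intro a b q; unfold cyc; omega
  have h2 := cyc_lip k l p p' 0 (by omega) hp hp' h
  have h3 := cyc_lip k l p p' (2*k+1) (by omega) hp hp' h
  rw [hc, hc, hd, hd] at *
  unfold xd
  omega

lemma xd_le_cd (k l p q : ℕ) (hp : p = 0 ∨ p = 2*k+1) : xd k l q ≤ cd k l p q + 1 := by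
  rcases hp with hp | hp <;> subst hp <;> unfold xd cd <;>
    [skip; rw [cyc_self]] <;> omega

lemma cd_le_xd (k l p q : ℕ) (hp : p = 0 ∨ p = 2*k+1) : cd k l p q ≤ xd k l q + 1 := by
  have h0 := cyc_self k l 0
  have hT := cyc_self k l (2*k+1)
  rcases hp with hp | hp <;> subst hp <;> unfold xd cd <;> omega

lemma xd_small (k l p : ℕ) (hp : p = 0 ∨ p = 2*k+1) : xd k l p ≤ 0 + 1 := by
  have h0 := cyc_self k l 0
  have hT := cyc_self k l (2*k+1)
  rcases hp with hp | hp <;> subst hp <;> unfold xd <;> omega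

set_option maxHeartbeats 2000000 in
lemma DD_lip (k l : ℕ) (hk : 2 ≤ k) (hl : 2 ≤ l) (a b w : TV k l)
    (hab : (TG k l).Adj a b) : DD k l a w ≤ DD k l b w + 1 := by
  simp only [thetaGraph, SimpleGraph.fromRel_adj] at hab
  obtain ⟨-, hr⟩ := hab
  rcases a with _|_|⟨i,hi⟩|⟨i,hi⟩|⟨i,hi⟩ <;> rcases b with _|_|⟨j,hj⟩|⟨j,hj⟩|⟨j,hj⟩ <;>
    simp only [thetaRel, false_or, or_false, or_self] at hr <;>
    rcases w with _|_|⟨m,hm⟩|⟨m,hm⟩|⟨m,hm⟩ <;>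
    simp [DD, isx, tpos] <;>
    first
      | exact absurd hr (by omega)
      | exact Nat.zero_le _
      | ((apply cd_lip k l) <;> omega)
      | ((apply xd_lip k l) <;> omega)
      | ((apply xd_le_cd k l) <;> omega)
      | ((apply cd_le_xd k l) <;> omega)
      | ((apply xd_small k l) <;> omega)


lemma DD_le_length (k l : ℕ) (hk : 2 ≤ k) (hl : 2 ≤ l) {v w : TV k l}
    (p : (TG k l).Walk v w) : DD k l v w ≤ p.length := by
  induction p with
  | nil => simp [DD_self]
  | @cons a b c h q ih =>
    have := DD_lip k l hk hl a b c h
    rw [SimpleGraph.Walk.length_cons]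
    omega

lemma DD_le_dist (k l : ℕ) (hk : 2 ≤ k) (hl : 2 ≤ l) {v w : TV k l}
    (hr : (TG k l).Reachable v w) : DD k l v w ≤ (TG k l).dist v w := by
  obtain ⟨p, hp⟩ := hr.exists_walk_length_eq_dist
  exact hp ▸ DD_le_length k l hk hl p

lemma wadj {k l : ℕ} {u v : TV k l} (h : (TG k l).Adj u v) :
    ∃ p : (TG k l).Walk u v, p.length = 1 := ⟨h.toWalk, rfl⟩

lemma wtrans {k l : ℕ} {u v w : TV k l} {m n : ℕ}
    (h1 : ∃ p : (TG k l).Walk u v, p.length = m)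
    (h2 : ∃ p : (TG k l).Walk v w, p.length = n) :
    ∃ p : (TG k l).Walk u w, p.length = m + n := by
  obtain ⟨p, hp⟩ := h1; obtain ⟨q, hq⟩ := h2
  exact ⟨p.append q, by rw [SimpleGraph.Walk.length_append, hp, hq]⟩

lemma wrev {k l : ℕ} {u v : TV k l} {m : ℕ}
    (h1 : ∃ p : (TG k l).Walk u v, p.length = m) :
    ∃ p : (TG k l).Walk v u, p.length = m := by
  obtain ⟨p, hp⟩ := h1
  exact ⟨p.reverse, by rw [SimpleGraph.Walk.length_reverse, hp]⟩

lemma wcast {k l : ℕ} {u v : TV k l} {m m' : ℕ}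
    (h1 : ∃ p : (TG k l).Walk u v, p.length = m) (h : m = m') :
    ∃ p : (TG k l).Walk u v, p.length = m' := h ▸ h1

lemma adjR {k l : ℕ} {v w : TV k l} (hne : v ≠ w)
    (h : thetaRel 2 (2*k+1) (2*l+1) v w) : (TG k l).Adj v w := by
  simp only [TG, thetaGraph, SimpleGraph.fromRel_adj]
  exact ⟨hne, Or.inl h⟩

lemma walk_y (k l : ℕ) : ∀ (d : ℕ) (i j : Fin (2*k+1-1)), (j : ℕ) = (i : ℕ) + d →
    ∃ p : (TG k l).Walk (.y i) (.y j), p.length = d := by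
  intro d
  induction d with
  | zero =>
    intro i j h
    obtain rfl : i = j := Fin.ext (by omega)
    exact ⟨.nil, rfl⟩
  | succ d ih =>
    intro i j h
    have hlt : (i : ℕ) + d < 2*k+1-1 := by have := j.isLt; omega
    obtain ⟨p, hp⟩ := ih i ⟨(i : ℕ) + d, hlt⟩ rfl
    have hadj : (TG k l).Adj (.y ⟨(i : ℕ) + d, hlt⟩) (.y j) := by
      refine adjR ?_ ?_
      · simp only [ne_eq, ThetaV.y.injEq, Fin.ext_iff]; omega
      · show (j : ℕ) = (i : ℕ) + d + 1
        omega
    exact ⟨p.concat hadj, by rw [SimpleGraph.Walk.length_concat, hp]⟩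

lemma walk_z (k l : ℕ) : ∀ (d : ℕ) (i j : Fin (2*l+1-1)), (j : ℕ) = (i : ℕ) + d →
    ∃ p : (TG k l).Walk (.z i) (.z j), p.length = d := by
  intro d
  induction d with
  | zero =>
    intro i j h
    obtain rfl : i = j := Fin.ext (by omega)
    exact ⟨.nil, rfl⟩
  | succ d ih =>
    intro i j h
    have hlt : (i : ℕ) + d < 2*l+1-1 := by have := j.isLt; omega
    obtain ⟨p, hp⟩ := ih i ⟨(i : ℕ) + d, hlt⟩ rfl
    have hadj : (TG k l).Adj (.z ⟨(i : ℕ) + d, hlt⟩) (.z j) := by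
      refine adjR ?_ ?_
      · simp only [ne_eq, ThetaV.z.injEq, Fin.ext_iff]; omega
      · show (j : ℕ) = (i : ℕ) + d + 1
        omega
    exact ⟨p.concat hadj, by rw [SimpleGraph.Walk.length_concat, hp]⟩

lemma dist_eq_of (k l : ℕ) (hk : 2 ≤ k) (hl : 2 ≤ l) {v w : TV k l} {m : ℕ}
    (hw : ∃ p : (TG k l).Walk v w, p.length = m) (hD : DD k l v w = m) :
    (TG k l).dist v w = m := by
  obtain ⟨p, hp⟩ := hw
  have h1 : (TG k l).dist v w ≤ m := hp ▸ SimpleGraph.dist_le p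
  have h2 := DD_le_dist k l hk hl ⟨p⟩
  omega

section Dists
variable (k l : ℕ) (hk : 2 ≤ k) (hl : 2 ≤ l)
include hk hl

lemma aSY : (TG k l).Adj .s (.y ⟨0, by omega⟩) := by
  refine adjR ?_ rfl; intro h; cases h

lemma aTY : (TG k l).Adj .t (.y ⟨2*k-1, by omega⟩) := by
  refine adjR ?_ ?_
  · intro h; cases h
  · show (2*k-1 : ℕ) = 2*k+1-2; omega

lemma aSX : (TG k l).Adj .s (.x ⟨0, by omega⟩) := by
  refine adjR ?_ rfl; intro h; cases h

lemma aTX : (TG k l).Adj .t (.x ⟨0, by omega⟩) := by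
  refine adjR ?_ ?_
  · intro h; cases h
  · show (0 : ℕ) = 2-2; omega

lemma aSZ : (TG k l).Adj .s (.z ⟨0, by omega⟩) := by
  refine adjR ?_ rfl; intro h; cases h

lemma aTZ : (TG k l).Adj .t (.z ⟨2*l-1, by omega⟩) := by
  refine adjR ?_ ?_
  · intro h; cases h
  · show (2*l-1 : ℕ) = 2*l+1-2; omega

end Dists

def A1 (k l : ℕ) (hk : 2 ≤ k) (hl : 2 ≤ l) : TV k l := .y ⟨0, by omega⟩
def A2 (k l : ℕ) (hk : 2 ≤ k) (hl : 2 ≤ l) : TV k l := .y ⟨k, by omega⟩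
def A3 (k l : ℕ) (hk : 2 ≤ k) (hl : 2 ≤ l) : TV k l := .y ⟨k+1, by omega⟩
def Ytop (k l : ℕ) (hk : 2 ≤ k) (hl : 2 ≤ l) : TV k l := .y ⟨2*k-1, by omega⟩
def B1 (k l : ℕ) (hk : 2 ≤ k) (hl : 2 ≤ l) : TV k l := .z ⟨2*l-1, by omega⟩
def B2 (k l : ℕ) (hk : 2 ≤ k) (hl : 2 ≤ l) : TV k l := .z ⟨l-1, by omega⟩
def B3 (k l : ℕ) (hk : 2 ≤ k) (hl : 2 ≤ l) : TV k l := .z ⟨l-2, by omega⟩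
def Z0 (k l : ℕ) (hk : 2 ≤ k) (hl : 2 ≤ l) : TV k l := .z ⟨0, by omega⟩
def C0 (k l : ℕ) (hk : 2 ≤ k) (hl : 2 ≤ l) : TV k l := .x ⟨0, by omega⟩

section Dists2
variable (k l : ℕ) (hk : 2 ≤ k) (hl : 2 ≤ l)
include hk hl

-- single edge walks
lemma wSY : ∃ p : (TG k l).Walk .s (A1 k l hk hl), p.length = 1 := wadj (aSY k l hk hl)
lemma wTY : ∃ p : (TG k l).Walk .t (Ytop k l hk hl), p.length = 1 := wadj (aTY k l hk hl)
lemma wSX : ∃ p : (TG k l).Walk .s (C0 k l hk hl), p.length = 1 := wadj (aSX k l hk hl)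
lemma wTX : ∃ p : (TG k l).Walk .t (C0 k l hk hl), p.length = 1 := wadj (aTX k l hk hl)
lemma wSZ : ∃ p : (TG k l).Walk .s (Z0 k l hk hl), p.length = 1 := wadj (aSZ k l hk hl)
lemma wTZ : ∃ p : (TG k l).Walk .t (B1 k l hk hl), p.length = 1 := wadj (aTZ k l hk hl)

set_option maxHeartbeats 1000000 in
lemma dist_a1a2 : (TG k l).dist (A1 k l hk hl) (A2 k l hk hl) = k := by
  refine dist_eq_of k l hk hl (walk_y k l k _ _ (by show k = 0 + k; omega)) ?_
  simp [A1, A2, DD, isx, cd, cyc, xd, tpos]; omega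

set_option maxHeartbeats 1000000 in
lemma dist_a1a3 : (TG k l).dist (A1 k l hk hl) (A3 k l hk hl) = k+1 := by
  refine dist_eq_of k l hk hl (walk_y k l (k+1) _ _ (by show k+1 = 0 + (k+1); omega)) ?_
  simp [A1, A3, DD, isx, cd, cyc, xd, tpos]; omega

set_option maxHeartbeats 1000000 in
lemma dist_a2a3 : (TG k l).dist (A2 k l hk hl) (A3 k l hk hl) = 1 := by
  refine dist_eq_of k l hk hl (walk_y k l 1 _ _ (by show k+1 = k + 1; omega)) ?_
  simp [A2, A3, DD, isx, cd, cyc, xd, tpos]; omega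

set_option maxHeartbeats 1000000 in
lemma dist_b1b2 : (TG k l).dist (B1 k l hk hl) (B2 k l hk hl) = l := by
  refine dist_eq_of k l hk hl (wrev (walk_z k l l _ _ (by show 2*l-1 = (l-1) + l; omega))) ?_
  simp [B1, B2, DD, isx, cd, cyc, xd, tpos]; omega

set_option maxHeartbeats 1000000 in
lemma dist_b1b3 : (TG k l).dist (B1 k l hk hl) (B3 k l hk hl) = l+1 := by
  refine dist_eq_of k l hk hl (wrev (walk_z k l (l+1) _ _ (by show 2*l-1 = (l-2) + (l+1); omega))) ?_
  simp [B1, B3, DD, isx, cd, cyc, xd, tpos]; omega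

set_option maxHeartbeats 1000000 in
lemma dist_b2b3 : (TG k l).dist (B2 k l hk hl) (B3 k l hk hl) = 1 := by
  refine dist_eq_of k l hk hl (wrev (walk_z k l 1 _ _ (by show l-1 = (l-2) + 1; omega))) ?_
  simp [B2, B3, DD, isx, cd, cyc, xd, tpos]; omega

set_option maxHeartbeats 1000000 in
lemma dist_a1b1 : (TG k l).dist (A1 k l hk hl) (B1 k l hk hl) = 4 := by
  refine dist_eq_of k l hk hl (wcast (wtrans (wtrans (wtrans (wrev (wSY k l hk hl))
    (wSX k l hk hl)) (wrev (wTX k l hk hl))) (wTZ k l hk hl)) (by omega)) ?_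
  simp [A1, B1, DD, isx, cd, cyc, xd, tpos]; omega

set_option maxHeartbeats 1000000 in
lemma dist_a1b2 : (TG k l).dist (A1 k l hk hl) (B2 k l hk hl) = l+1 := by
  refine dist_eq_of k l hk hl (wcast (wtrans (wtrans (wrev (wSY k l hk hl)) (wSZ k l hk hl))
    (walk_z k l (l-1) _ _ (by show l-1 = 0 + (l-1); omega))) (by omega)) ?_
  simp [A1, B2, DD, isx, cd, cyc, xd, tpos]; omega

set_option maxHeartbeats 1000000 in
lemma dist_a1b3 : (TG k l).dist (A1 k l hk hl) (B3 k l hk hl) = l := by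
  refine dist_eq_of k l hk hl (wcast (wtrans (wtrans (wrev (wSY k l hk hl)) (wSZ k l hk hl))
    (walk_z k l (l-2) _ _ (by show l-2 = 0 + (l-2); omega))) (by omega)) ?_
  simp [A1, B3, DD, isx, cd, cyc, xd, tpos]; omega

set_option maxHeartbeats 1000000 in
lemma dist_a2b1 : (TG k l).dist (A2 k l hk hl) (B1 k l hk hl) = k+1 := by
  refine dist_eq_of k l hk hl (wcast (wtrans (wtrans
    (walk_y k l (k-1) _ _ (by show 2*k-1 = k + (k-1); omega))
    (wrev (wTY k l hk hl))) (wTZ k l hk hl)) (by omega)) ?_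
  simp [A2, B1, Ytop, DD, isx, cd, cyc, xd, tpos]; omega

set_option maxHeartbeats 1000000 in
lemma dist_a2b2 : (TG k l).dist (A2 k l hk hl) (B2 k l hk hl) = k+l+1 := by
  refine dist_eq_of k l hk hl (wcast (wtrans (wtrans (wtrans
    (wrev (walk_y k l k _ _ (by show k = 0 + k; omega)))
    (wrev (wSY k l hk hl))) (wSZ k l hk hl))
    (walk_z k l (l-1) _ _ (by show l-1 = 0 + (l-1); omega))) (by omega)) ?_
  simp [A1, A2, B2, DD, isx, cd, cyc, xd, tpos]; omega

set_option maxHeartbeats 1000000 in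
lemma dist_a2b3 : (TG k l).dist (A2 k l hk hl) (B3 k l hk hl) = k+l := by
  refine dist_eq_of k l hk hl (wcast (wtrans (wtrans (wtrans
    (wrev (walk_y k l k _ _ (by show k = 0 + k; omega)))
    (wrev (wSY k l hk hl))) (wSZ k l hk hl))
    (walk_z k l (l-2) _ _ (by show l-2 = 0 + (l-2); omega))) (by omega)) ?_
  simp [A1, A2, B3, DD, isx, cd, cyc, xd, tpos]; omega

set_option maxHeartbeats 1000000 in
lemma dist_a3b1 : (TG k l).dist (A3 k l hk hl) (B1 k l hk hl) = k := by
  refine dist_eq_of k l hk hl (wcast (wtrans (wtrans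
    (walk_y k l (k-2) _ _ (by show 2*k-1 = (k+1) + (k-2); omega))
    (wrev (wTY k l hk hl))) (wTZ k l hk hl)) (by omega)) ?_
  simp [A3, B1, Ytop, DD, isx, cd, cyc, xd, tpos]; omega

set_option maxHeartbeats 1000000 in
lemma dist_a3b2 : (TG k l).dist (A3 k l hk hl) (B2 k l hk hl) = k+l := by
  refine dist_eq_of k l hk hl (wcast (wtrans (wtrans (wtrans
    (walk_y k l (k-2) _ _ (by show 2*k-1 = (k+1) + (k-2); omega))
    (wrev (wTY k l hk hl))) (wTZ k l hk hl))
    (wrev (walk_z k l l _ _ (by show 2*l-1 = (l-1) + l; omega)))) (by omega)) ?_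
  simp [A3, B2, B1, Ytop, DD, isx, cd, cyc, xd, tpos]; omega

set_option maxHeartbeats 1000000 in
lemma dist_a3b3 : (TG k l).dist (A3 k l hk hl) (B3 k l hk hl) = k+l := by
  refine dist_eq_of k l hk hl (wcast (wtrans (wtrans (wtrans (wtrans (wtrans
    (walk_y k l (k-2) _ _ (by show 2*k-1 = (k+1) + (k-2); omega))
    (wrev (wTY k l hk hl))) (wTX k l hk hl)) (wrev (wSX k l hk hl))) (wSZ k l hk hl))
    (walk_z k l (l-2) _ _ (by show l-2 = 0 + (l-2); omega))) (by omega)) ?_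
  simp [A3, B3, Ytop, DD, isx, cd, cyc, xd, tpos]; omega

set_option maxHeartbeats 1000000 in
lemma dist_a1c0 : (TG k l).dist (A1 k l hk hl) (C0 k l hk hl) = 2 := by
  refine dist_eq_of k l hk hl (wcast (wtrans (wrev (wSY k l hk hl)) (wSX k l hk hl)) (by omega)) ?_
  simp [A1, C0, DD, isx, cd, cyc, xd, tpos]; omega

set_option maxHeartbeats 1000000 in
lemma dist_a2c0 : (TG k l).dist (A2 k l hk hl) (C0 k l hk hl) = k+1 := by
  refine dist_eq_of k l hk hl (wcast (wtrans (wtrans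
    (walk_y k l (k-1) _ _ (by show 2*k-1 = k + (k-1); omega))
    (wrev (wTY k l hk hl))) (wTX k l hk hl)) (by omega)) ?_
  simp [A2, C0, Ytop, DD, isx, cd, cyc, xd, tpos]; omega

set_option maxHeartbeats 1000000 in
lemma dist_a3c0 : (TG k l).dist (A3 k l hk hl) (C0 k l hk hl) = k := by
  refine dist_eq_of k l hk hl (wcast (wtrans (wtrans
    (walk_y k l (k-2) _ _ (by show 2*k-1 = (k+1) + (k-2); omega))
    (wrev (wTY k l hk hl))) (wTX k l hk hl)) (by omega)) ?_
  simp [A3, C0, Ytop, DD, isx, cd, cyc, xd, tpos]; omega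

set_option maxHeartbeats 1000000 in
lemma dist_b1c0 : (TG k l).dist (B1 k l hk hl) (C0 k l hk hl) = 2 := by
  refine dist_eq_of k l hk hl (wcast (wtrans (wrev (wTZ k l hk hl)) (wTX k l hk hl)) (by omega)) ?_
  simp [B1, C0, DD, isx, cd, cyc, xd, tpos]; omega

set_option maxHeartbeats 1000000 in
lemma dist_b2c0 : (TG k l).dist (B2 k l hk hl) (C0 k l hk hl) = l+1 := by
  refine dist_eq_of k l hk hl (wcast (wtrans (wtrans
    (wrev (walk_z k l (l-1) _ _ (by show l-1 = 0 + (l-1); omega)))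
    (wrev (wSZ k l hk hl))) (wSX k l hk hl)) (by omega)) ?_
  simp [B2, C0, Z0, DD, isx, cd, cyc, xd, tpos]; omega

set_option maxHeartbeats 1000000 in
lemma dist_b3c0 : (TG k l).dist (B3 k l hk hl) (C0 k l hk hl) = l := by
  refine dist_eq_of k l hk hl (wcast (wtrans (wtrans
    (wrev (walk_z k l (l-2) _ _ (by show l-2 = 0 + (l-2); omega)))
    (wrev (wSZ k l hk hl))) (wSX k l hk hl)) (by omega)) ?_
  simp [B3, C0, Z0, DD, isx, cd, cyc, xd, tpos]; omega

end Dists2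

def eqv (a b c : ℕ) : (Unit ⊕ Unit ⊕ Fin (a-1) ⊕ Fin (b-1) ⊕ Fin (c-1)) ≃ ThetaV a b c where
  toFun := fun u => match u with
    | .inl _ => .s
    | .inr (.inl _) => .t
    | .inr (.inr (.inl i)) => .x i
    | .inr (.inr (.inr (.inl i))) => .y i
    | .inr (.inr (.inr (.inr i))) => .z i
  invFun := fun v => match v with
    | .s => .inl ()
    | .t => .inr (.inl ())
    | .x i => .inr (.inr (.inl i))
    | .y i => .inr (.inr (.inr (.inl i)))
    | .z i => .inr (.inr (.inr (.inr i)))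
  left_inv := by rintro (⟨⟩ | ⟨⟩ | i | i | i) <;> rfl
  right_inv := by intro v; cases v <;> rfl

lemma sum_thetaV {a b c : ℕ} (g : ThetaV a b c → ℝ) :
    ∑ v, g v = g .s + g .t + (∑ i, g (.x i)) + (∑ i, g (.y i)) + (∑ i, g (.z i)) := by
  rw [← Equiv.sum_comp (eqv a b c) g]
  simp [eqv, Fintype.sum_sum_type]
  ring

lemma sum_ind {α : Type*} [Fintype α] [DecidableEq α] (g : α → ℝ) (a : α) (c : ℝ) :
    ∑ i, g i * (if i = a then c else 0) = g a * c := by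
  simp [mul_ite, mul_zero, Finset.sum_ite_eq', Finset.mem_univ]

def fF (k l : ℕ) : TV k l → ℝ
  | .s => 0
  | .t => 0
  | .x _ => -2 * (2 * (k : ℝ) + 2 * l - 4) - 2 * (11 - 4 * (k : ℝ) - 4 * l)
      - 2 * (4 * (k : ℝ) + 4 * l - 13)
  | .y i =>
      if (i : ℕ) = 0 then 2 * (k : ℝ) + 2 * l - 4
      else if (i : ℕ) = k then 11 - 4 * (k : ℝ) - 4 * l
      else if (i : ℕ) = k + 1 then 4 * (k : ℝ) + 4 * l - 13
      else 0
  | .z i =>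
      if (i : ℕ) = 2 * l - 1 then 2 * (k : ℝ) + 2 * l - 4
      else if (i : ℕ) = l - 1 then 11 - 4 * (k : ℝ) - 4 * l
      else if (i : ℕ) = l - 2 then 4 * (k : ℝ) + 4 * l - 13
      else 0

lemma f_expand (k l : ℕ) (hk : 2 ≤ k) (hl : 2 ≤ l) (v : TV k l) :
    fF k l v =
      (if v = A1 k l hk hl then 2 * (k : ℝ) + 2 * l - 4 else 0)
      + (if v = A2 k l hk hl then 11 - 4 * (k : ℝ) - 4 * l else 0)
      + (if v = A3 k l hk hl then 4 * (k : ℝ) + 4 * l - 13 else 0)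
      + (if v = B1 k l hk hl then 2 * (k : ℝ) + 2 * l - 4 else 0)
      + (if v = B2 k l hk hl then 11 - 4 * (k : ℝ) - 4 * l else 0)
      + (if v = B3 k l hk hl then 4 * (k : ℝ) + 4 * l - 13 else 0)
      + (if v = C0 k l hk hl then -2 * (2 * (k : ℝ) + 2 * l - 4)
          - 2 * (11 - 4 * (k : ℝ) - 4 * l) - 2 * (4 * (k : ℝ) + 4 * l - 13) else 0) := by
  cases v with
  | s => simp [fF, A1, A2, A3, B1, B2, B3, C0]
  | t => simp [fF, A1, A2, A3, B1, B2, B3, C0]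
  | x i =>
    have hi := i.isLt
    have hi0 : i = (⟨0, Nat.one_pos⟩ : Fin (2-1)) := Fin.ext (by omega)
    rw [hi0]
    simp [fF, A1, A2, A3, B1, B2, B3, C0]
  | y i =>
    have hi := i.isLt
    simp only [fF, A1, A2, A3, B1, B2, B3, C0, ThetaV.y.injEq, Fin.ext_iff,
      reduceCtorEq, if_false]
    split_ifs <;> first | ring1 | (exfalso; omega)
  | z i =>
    have hi := i.isLt
    simp only [fF, A1, A2, A3, B1, B2, B3, C0, ThetaV.z.injEq, Fin.ext_iff,
      reduceCtorEq, if_false]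
    split_ifs <;> first | ring1 | (exfalso; omega)

lemma sum_mul_f (k l : ℕ) (hk : 2 ≤ k) (hl : 2 ≤ l) (g : TV k l → ℝ) :
    ∑ v, g v * fF k l v =
      g (A1 k l hk hl) * (2 * (k : ℝ) + 2 * l - 4)
      + g (A2 k l hk hl) * (11 - 4 * (k : ℝ) - 4 * l)
      + g (A3 k l hk hl) * (4 * (k : ℝ) + 4 * l - 13)
      + g (B1 k l hk hl) * (2 * (k : ℝ) + 2 * l - 4)
      + g (B2 k l hk hl) * (11 - 4 * (k : ℝ) - 4 * l)
      + g (B3 k l hk hl) * (4 * (k : ℝ) + 4 * l - 13)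
      + g (C0 k l hk hl) * (-2 * (2 * (k : ℝ) + 2 * l - 4)
          - 2 * (11 - 4 * (k : ℝ) - 4 * l) - 2 * (4 * (k : ℝ) + 4 * l - 13)) := by
  have step : ∑ v, g v * fF k l v = ∑ v,
      (g v * (if v = A1 k l hk hl then 2 * (k : ℝ) + 2 * l - 4 else 0)
      + g v * (if v = A2 k l hk hl then 11 - 4 * (k : ℝ) - 4 * l else 0)
      + g v * (if v = A3 k l hk hl then 4 * (k : ℝ) + 4 * l - 13 else 0)
      + g v * (if v = B1 k l hk hl then 2 * (k : ℝ) + 2 * l - 4 else 0)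
      + g v * (if v = B2 k l hk hl then 11 - 4 * (k : ℝ) - 4 * l else 0)
      + g v * (if v = B3 k l hk hl then 4 * (k : ℝ) + 4 * l - 13 else 0)
      + g v * (if v = C0 k l hk hl then -2 * (2 * (k : ℝ) + 2 * l - 4)
          - 2 * (11 - 4 * (k : ℝ) - 4 * l) - 2 * (4 * (k : ℝ) + 4 * l - 13) else 0)) :=
    Finset.sum_congr rfl fun v _ => by rw [f_expand k l hk hl v]; ring
  rw [step]
  rw [Finset.sum_add_distrib, Finset.sum_add_distrib, Finset.sum_add_distrib,
    Finset.sum_add_distrib, Finset.sum_add_distrib, Finset.sum_add_distrib]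
  rw [sum_ind g, sum_ind g, sum_ind g, sum_ind g, sum_ind g, sum_ind g, sum_ind g]

end Stmt18A

/-- For k, l >= 2 the theta graph Theta(2, 2k+1, 2l+1) is of non-QE class, witnessed by
the explicit function supported on y_1, z_{2l} (value u1 = 2k+2l-4), y_{k+1}, z_l
(value u2 = 11-4k-4l), y_{k+2}, z_{l-1} (value u3 = 4k+4l-13) and x_1
(value u4 = -2u1-2u2-2u3); it has zero sum and quadratic form 2(4k+4l-13) > 0.
Here the internal vertex constructor `ThetaV.y i` stands for y_{i+1}, etc. -/
theorem stmt18 (k l : ℕ) (hk : 2 ≤ k) (hl : 2 ≤ l) :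
    ∃ f : ThetaV 2 (2 * k + 1) (2 * l + 1) → ℝ,
      (∀ i : Fin (2 * k + 1 - 1), f (ThetaV.y i) =
        if (i : ℕ) = 0 then 2 * (k : ℝ) + 2 * l - 4
        else if (i : ℕ) = k then 11 - 4 * (k : ℝ) - 4 * l
        else if (i : ℕ) = k + 1 then 4 * (k : ℝ) + 4 * l - 13
        else 0) ∧
      (∀ i : Fin (2 * l + 1 - 1), f (ThetaV.z i) =
        if (i : ℕ) = 2 * l - 1 then 2 * (k : ℝ) + 2 * l - 4
        else if (i : ℕ) = l - 1 then 11 - 4 * (k : ℝ) - 4 * l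
        else if (i : ℕ) = l - 2 then 4 * (k : ℝ) + 4 * l - 13
        else 0) ∧
      (∀ i : Fin (2 - 1), f (ThetaV.x i) =
        -2 * (2 * (k : ℝ) + 2 * l - 4) - 2 * (11 - 4 * (k : ℝ) - 4 * l)
          - 2 * (4 * (k : ℝ) + 4 * l - 13)) ∧
      f ThetaV.s = 0 ∧ f ThetaV.t = 0 ∧
      (∑ v, f v) = 0 ∧
      (∑ v, ∑ w, ((thetaGraph 2 (2 * k + 1) (2 * l + 1)).dist v w : ℝ) * f v * f w)
        = 2 * (4 * (k : ℝ) + 4 * l - 13) ∧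
      0 < 2 * (4 * (k : ℝ) + 4 * l - 13) := by
  refine ⟨Stmt18A.fF k l, fun i => rfl, fun i => rfl, fun i => rfl, rfl, rfl, ?_, ?_, ?_⟩
  · have h := Stmt18A.sum_mul_f k l hk hl (fun _ => (1:ℝ))
    simp only [one_mul] at h
    rw [h]; ring
  · set G := thetaGraph 2 (2 * k + 1) (2 * l + 1) with hG
    have step1 : (∑ v, ∑ w, (G.dist v w : ℝ) * Stmt18A.fF k l v * Stmt18A.fF k l w)
        = ∑ v, ((G.dist v (Stmt18A.A1 k l hk hl) : ℝ) * Stmt18A.fF k l v * (2 * (k : ℝ) + 2 * l - 4)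
        + (G.dist v (Stmt18A.A2 k l hk hl) : ℝ) * Stmt18A.fF k l v * (11 - 4 * (k : ℝ) - 4 * l)
        + (G.dist v (Stmt18A.A3 k l hk hl) : ℝ) * Stmt18A.fF k l v * (4 * (k : ℝ) + 4 * l - 13)
        + (G.dist v (Stmt18A.B1 k l hk hl) : ℝ) * Stmt18A.fF k l v * (2 * (k : ℝ) + 2 * l - 4)
        + (G.dist v (Stmt18A.B2 k l hk hl) : ℝ) * Stmt18A.fF k l v * (11 - 4 * (k : ℝ) - 4 * l)
        + (G.dist v (Stmt18A.B3 k l hk hl) : ℝ) * Stmt18A.fF k l v * (4 * (k : ℝ) + 4 * l - 13)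
        + (G.dist v (Stmt18A.C0 k l hk hl) : ℝ) * Stmt18A.fF k l v * (-2 * (2 * (k : ℝ) + 2 * l - 4) - 2 * (11 - 4 * (k : ℝ) - 4 * l) - 2 * (4 * (k : ℝ) + 4 * l - 13))) :=
      Finset.sum_congr rfl fun v _ =>
        Stmt18A.sum_mul_f k l hk hl (fun w => (G.dist v w : ℝ) * Stmt18A.fF k l v)
    rw [step1]
    simp only [Finset.sum_add_distrib, ← Finset.sum_mul]
    have E0 : (∑ v, (G.dist v (Stmt18A.A1 k l hk hl) : ℝ) * Stmt18A.fF k l v) = (G.dist (Stmt18A.A1 k l hk hl) (Stmt18A.A1 k l hk hl) : ℝ) * (2 * (k : ℝ) + 2 * l - 4) + (G.dist (Stmt18A.A2 k l hk hl) (Stmt18A.A1 k l hk hl) : ℝ) * (11 - 4 * (k : ℝ) - 4 * l) + (G.dist (Stmt18A.A3 k l hk hl) (Stmt18A.A1 k l hk hl) : ℝ) * (4 * (k : ℝ) + 4 * l - 13) + (G.dist (Stmt18A.B1 k l hk hl) (Stmt18A.A1 k l hk hl) : ℝ) * (2 * (k : ℝ) + 2 * l - 4) + (G.dist (Stmt18A.B2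 k l hk hl) (Stmt18A.A1 k l hk hl) : ℝ) * (11 - 4 * (k : ℝ) - 4 * l) + (G.dist (Stmt18A.B3 k l hk hl) (Stmt18A.A1 k l hk hl) : ℝ) * (4 * (k : ℝ) + 4 * l - 13) + (G.dist (Stmt18A.C0 k l hk hl) (Stmt18A.A1 k l hk hl) : ℝ) * (-2 * (2 * (k : ℝ) + 2 * l - 4) - 2 * (11 - 4 * (k : ℝ) - 4 * l) - 2 * (4 * (k : ℝ) + 4 * l - 13)) :=
      Stmt18A.sum_mul_f k l hk hl (fun v => (G.dist v (Stmt18A.A1 k l hk hl) : ℝ))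
    have E1 : (∑ v, (G.dist v (Stmt18A.A2 k l hk hl) : ℝ) * Stmt18A.fF k l v) = (G.dist (Stmt18A.A1 k l hk hl) (Stmt18A.A2 k l hk hl) : ℝ) * (2 * (k : ℝ) + 2 * l - 4) + (G.dist (Stmt18A.A2 k l hk hl) (Stmt18A.A2 k l hk hl) : ℝ) * (11 - 4 * (k : ℝ) - 4 * l) + (G.dist (Stmt18A.A3 k l hk hl) (Stmt18A.A2 k l hk hl) : ℝ) * (4 * (k : ℝ) + 4 * l - 13) + (G.dist (Stmt18A.B1 k l hk hl) (Stmt18A.A2 k l hk hl) : ℝ) * (2 * (k : ℝ) + 2 * l - 4) + (G.dist (Stmt18A.B2 k l hk hl) (Stmt18A.A2 k l hk hl) : ℝ) * (11 - 4 * (k : ℝ) - 4 * l) + (G.dist (Stmt18A.B3 k l hk hl) (Stmt18A.A2 k l hk hl) : ℝ) * (4 * (k : ℝ) + 4 * l - 13) + (G.dist (Stmt18A.C0 k l hk hl) (Stmt18A.A2 k l hk hl) : ℝ) * (-2 * (2 * (k : ℝ) + 2 * l - 4) - 2 * (11 - 4 * (k : ℝ) - 4 * l) - 2 * (4 * (k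 : ℝ) + 4 * l - 13)) :=
      Stmt18A.sum_mul_f k l hk hl (fun v => (G.dist v (Stmt18A.A2 k l hk hl) : ℝ))
    have E2 : (∑ v, (G.dist v (Stmt18A.A3 k l hk hl) : ℝ) * Stmt18A.fF k l v) = (G.dist (Stmt18A.A1 k l hk hl) (Stmt18A.A3 k l hk hl) : ℝ) * (2 * (k : ℝ) + 2 * l - 4) + (G.dist (Stmt18A.A2 k l hk hl) (Stmt18A.A3 k l hk hl) : ℝ) * (11 - 4 * (k : ℝ) - 4 * l) + (G.dist (Stmt18A.A3 k l hk hl) (Stmt18A.A3 k l hk hl) : ℝ) * (4 * (k : ℝ) + 4 * l - 13) + (G.dist (Stmt18A.B1 k l hk hl) (Stmt18A.A3 k l hk hl) : ℝ) * (2 * (k : ℝ) + 2 * l - 4) + (G.dist (Stmt18A.B2 k l hk hl) (Stmt18A.A3 k l hk hl) : ℝ) * (11 - 4 * (k : ℝ) - 4 * l) + (G.dist (Stmt18A.B3 k l hk hl) (Stmt18A.A3 k l hk hl) : ℝ) * (4 * (k : ℝ) + 4 * l - 13) + (G.dist (Stmt18A.C0 k l hk hl) (Stmt18A.A3 k l hk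 hl) : ℝ) * (-2 * (2 * (k : ℝ) + 2 * l - 4) - 2 * (11 - 4 * (k : ℝ) - 4 * l) - 2 * (4 * (k : ℝ) + 4 * l - 13)) :=
      Stmt18A.sum_mul_f k l hk hl (fun v => (G.dist v (Stmt18A.A3 k l hk hl) : ℝ))
    have E3 : (∑ v, (G.dist v (Stmt18A.B1 k l hk hl) : ℝ) * Stmt18A.fF k l v) = (G.dist (Stmt18A.A1 k l hk hl) (Stmt18A.B1 k l hk hl) : ℝ) * (2 * (k : ℝ) + 2 * l - 4) + (G.dist (Stmt18A.A2 k l hk hl) (Stmt18A.B1 k l hk hl) : ℝ) * (11 - 4 * (k : ℝ) - 4 * l) + (G.dist (Stmt18A.A3 k l hk hl) (Stmt18A.B1 k l hk hl) : ℝ) * (4 * (k : ℝ) + 4 * l - 13) + (G.dist (Stmt18A.B1 k l hk hl) (Stmt18A.B1 k l hk hl) : ℝ) * (2 * (k : ℝ) + 2 * l - 4) + (G.dist (Stmt18A.B2 k l hk hl) (Stmt18A.B1 k l hk hl) : ℝ) * (11 - 4 * (k : ℝ) - 4 * l) + (G.dist (Stmt18A.B3 k l hk hl) (Stmt18A.B1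 k l hk hl) : ℝ) * (4 * (k : ℝ) + 4 * l - 13) + (G.dist (Stmt18A.C0 k l hk hl) (Stmt18A.B1 k l hk hl) : ℝ) * (-2 * (2 * (k : ℝ) + 2 * l - 4) - 2 * (11 - 4 * (k : ℝ) - 4 * l) - 2 * (4 * (k : ℝ) + 4 * l - 13)) :=
      Stmt18A.sum_mul_f k l hk hl (fun v => (G.dist v (Stmt18A.B1 k l hk hl) : ℝ))
    have E4 : (∑ v, (G.dist v (Stmt18A.B2 k l hk hl) : ℝ) * Stmt18A.fF k l v) = (G.dist (Stmt18A.A1 k l hk hl) (Stmt18A.B2 k l hk hl) : ℝ) * (2 * (k : ℝ) + 2 * l - 4) + (G.dist (Stmt18A.A2 k l hk hl) (Stmt18A.B2 k l hk hl) : ℝ) * (11 - 4 * (k : ℝ) - 4 * l) + (G.dist (Stmt18A.A3 k l hk hl) (Stmt18A.B2 k l hk hl) : ℝ) * (4 * (k : ℝ) + 4 * l - 13) + (G.dist (Stmt18A.B1 k l hk hl) (Stmt18A.B2 k l hk hl) : ℝ) * (2 * (k : ℝ) + 2 * l - 4) + (G.dist (Stmt18A.B2 k l hk hl) (Stmt18A.B2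 k l hk hl) : ℝ) * (11 - 4 * (k : ℝ) - 4 * l) + (G.dist (Stmt18A.B3 k l hk hl) (Stmt18A.B2 k l hk hl) : ℝ) * (4 * (k : ℝ) + 4 * l - 13) + (G.dist (Stmt18A.C0 k l hk hl) (Stmt18A.B2 k l hk hl) : ℝ) * (-2 * (2 * (k : ℝ) + 2 * l - 4) - 2 * (11 - 4 * (k : ℝ) - 4 * l) - 2 * (4 * (k : ℝ) + 4 * l - 13)) :=
      Stmt18A.sum_mul_f k l hk hl (fun v => (G.dist v (Stmt18A.B2 k l hk hl) : ℝ))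
    have E5 : (∑ v, (G.dist v (Stmt18A.B3 k l hk hl) : ℝ) * Stmt18A.fF k l v) = (G.dist (Stmt18A.A1 k l hk hl) (Stmt18A.B3 k l hk hl) : ℝ) * (2 * (k : ℝ) + 2 * l - 4) + (G.dist (Stmt18A.A2 k l hk hl) (Stmt18A.B3 k l hk hl) : ℝ) * (11 - 4 * (k : ℝ) - 4 * l) + (G.dist (Stmt18A.A3 k l hk hl) (Stmt18A.B3 k l hk hl) : ℝ) * (4 * (k : ℝ) + 4 * l - 13) + (G.dist (Stmt18A.B1 k l hk hl) (Stmt18A.B3 k l hk hl) : ℝ) * (2 * (k : ℝ) + 2 * l - 4) + (G.dist (Stmt18A.B2 k l hk hl) (Stmt18A.B3 k l hk hl) : ℝ) * (11 - 4 * (k : ℝ) - 4 * l) + (G.dist (Stmt18A.B3 k l hk hl) (Stmt18A.B3 k l hk hl) : ℝ) * (4 * (k : ℝ) + 4 * l - 13) + (G.dist (Stmt18A.C0 k l hk hl) (Stmt18A.B3 k l hk hl) : ℝ) * (-2 * (2 * (k : ℝ) + 2 * l - 4) - 2 * (11 - 4 * (k : ℝ) - 4 * l) - 2 * (4 * (k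 : ℝ) + 4 * l - 13)) :=
      Stmt18A.sum_mul_f k l hk hl (fun v => (G.dist v (Stmt18A.B3 k l hk hl) : ℝ))
    have E6 : (∑ v, (G.dist v (Stmt18A.C0 k l hk hl) : ℝ) * Stmt18A.fF k l v) = (G.dist (Stmt18A.A1 k l hk hl) (Stmt18A.C0 k l hk hl) : ℝ) * (2 * (k : ℝ) + 2 * l - 4) + (G.dist (Stmt18A.A2 k l hk hl) (Stmt18A.C0 k l hk hl) : ℝ) * (11 - 4 * (k : ℝ) - 4 * l) + (G.dist (Stmt18A.A3 k l hk hl) (Stmt18A.C0 k l hk hl) : ℝ) * (4 * (k : ℝ) + 4 * l - 13) + (G.dist (Stmt18A.B1 k l hk hl) (Stmt18A.C0 k l hk hl) : ℝ) * (2 * (k : ℝ) + 2 * l - 4) + (G.dist (Stmt18A.B2 k l hk hl) (Stmt18A.C0 k l hk hl) : ℝ) * (11 - 4 * (k : ℝ) - 4 * l) + (G.dist (Stmt18A.B3 k l hk hl) (Stmt18A.C0 k l hk hl) : ℝ) * (4 * (k : ℝ) + 4 * l - 13) + (G.dist (Stmt18A.C0 k l hk hl) (Stmt18A.C0 k l hk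 hl) : ℝ) * (-2 * (2 * (k : ℝ) + 2 * l - 4) - 2 * (11 - 4 * (k : ℝ) - 4 * l) - 2 * (4 * (k : ℝ) + 4 * l - 13)) :=
      Stmt18A.sum_mul_f k l hk hl (fun v => (G.dist v (Stmt18A.C0 k l hk hl) : ℝ))
    rw [E0, E1, E2, E3, E4, E5, E6]
    clear E0 E1 E2 E3 E4 E5 E6
    have hdA1A1 : G.dist (Stmt18A.A1 k l hk hl) (Stmt18A.A1 k l hk hl) = 0 := SimpleGraph.dist_self
    have hdA1A2 : G.dist (Stmt18A.A1 k l hk hl) (Stmt18A.A2 k l hk hl) = k := Stmt18A.dist_a1a2 k l hk hl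
    have hdA1A3 : G.dist (Stmt18A.A1 k l hk hl) (Stmt18A.A3 k l hk hl) = k+1 := Stmt18A.dist_a1a3 k l hk hl
    have hdA1B1 : G.dist (Stmt18A.A1 k l hk hl) (Stmt18A.B1 k l hk hl) = 4 := Stmt18A.dist_a1b1 k l hk hl
    have hdA1B2 : G.dist (Stmt18A.A1 k l hk hl) (Stmt18A.B2 k l hk hl) = l+1 := Stmt18A.dist_a1b2 k l hk hl
    have hdA1B3 : G.dist (Stmt18A.A1 k l hk hl) (Stmt18A.B3 k l hk hl) = l := Stmt18A.dist_a1b3 k l hk hl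
    have hdA1C0 : G.dist (Stmt18A.A1 k l hk hl) (Stmt18A.C0 k l hk hl) = 2 := Stmt18A.dist_a1c0 k l hk hl
    have hdA2A1 : G.dist (Stmt18A.A2 k l hk hl) (Stmt18A.A1 k l hk hl) = k := by
      rw [SimpleGraph.dist_comm]; exact Stmt18A.dist_a1a2 k l hk hl
    have hdA2A2 : G.dist (Stmt18A.A2 k l hk hl) (Stmt18A.A2 k l hk hl) = 0 := SimpleGraph.dist_self
    have hdA2A3 : G.dist (Stmt18A.A2 k l hk hl) (Stmt18A.A3 k l hk hl) = 1 := Stmt18A.dist_a2a3 k l hk hl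
    have hdA2B1 : G.dist (Stmt18A.A2 k l hk hl) (Stmt18A.B1 k l hk hl) = k+1 := Stmt18A.dist_a2b1 k l hk hl
    have hdA2B2 : G.dist (Stmt18A.A2 k l hk hl) (Stmt18A.B2 k l hk hl) = k+l+1 := Stmt18A.dist_a2b2 k l hk hl
    have hdA2B3 : G.dist (Stmt18A.A2 k l hk hl) (Stmt18A.B3 k l hk hl) = k+l := Stmt18A.dist_a2b3 k l hk hl
    have hdA2C0 : G.dist (Stmt18A.A2 k l hk hl) (Stmt18A.C0 k l hk hl) = k+1 := Stmt18A.dist_a2c0 k l hk hl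
    have hdA3A1 : G.dist (Stmt18A.A3 k l hk hl) (Stmt18A.A1 k l hk hl) = k+1 := by
      rw [SimpleGraph.dist_comm]; exact Stmt18A.dist_a1a3 k l hk hl
    have hdA3A2 : G.dist (Stmt18A.A3 k l hk hl) (Stmt18A.A2 k l hk hl) = 1 := by
      rw [SimpleGraph.dist_comm]; exact Stmt18A.dist_a2a3 k l hk hl
    have hdA3A3 : G.dist (Stmt18A.A3 k l hk hl) (Stmt18A.A3 k l hk hl) = 0 := SimpleGraph.dist_self
    have hdA3B1 : G.dist (Stmt18A.A3 k l hk hl) (Stmt18A.B1 k l hk hl) = k := Stmt18A.dist_a3b1 k l hk hl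
    have hdA3B2 : G.dist (Stmt18A.A3 k l hk hl) (Stmt18A.B2 k l hk hl) = k+l := Stmt18A.dist_a3b2 k l hk hl
    have hdA3B3 : G.dist (Stmt18A.A3 k l hk hl) (Stmt18A.B3 k l hk hl) = k+l := Stmt18A.dist_a3b3 k l hk hl
    have hdA3C0 : G.dist (Stmt18A.A3 k l hk hl) (Stmt18A.C0 k l hk hl) = k := Stmt18A.dist_a3c0 k l hk hl
    have hdB1A1 : G.dist (Stmt18A.B1 k l hk hl) (Stmt18A.A1 k l hk hl) = 4 := by
      rw [SimpleGraph.dist_comm]; exact Stmt18A.dist_a1b1 k l hk hl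
    have hdB1A2 : G.dist (Stmt18A.B1 k l hk hl) (Stmt18A.A2 k l hk hl) = k+1 := by
      rw [SimpleGraph.dist_comm]; exact Stmt18A.dist_a2b1 k l hk hl
    have hdB1A3 : G.dist (Stmt18A.B1 k l hk hl) (Stmt18A.A3 k l hk hl) = k := by
      rw [SimpleGraph.dist_comm]; exact Stmt18A.dist_a3b1 k l hk hl
    have hdB1B1 : G.dist (Stmt18A.B1 k l hk hl) (Stmt18A.B1 k l hk hl) = 0 := SimpleGraph.dist_self
    have hdB1B2 : G.dist (Stmt18A.B1 k l hk hl) (Stmt18A.B2 k l hk hl) = l := Stmt18A.dist_b1b2 k l hk hl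
    have hdB1B3 : G.dist (Stmt18A.B1 k l hk hl) (Stmt18A.B3 k l hk hl) = l+1 := Stmt18A.dist_b1b3 k l hk hl
    have hdB1C0 : G.dist (Stmt18A.B1 k l hk hl) (Stmt18A.C0 k l hk hl) = 2 := Stmt18A.dist_b1c0 k l hk hl
    have hdB2A1 : G.dist (Stmt18A.B2 k l hk hl) (Stmt18A.A1 k l hk hl) = l+1 := by
      rw [SimpleGraph.dist_comm]; exact Stmt18A.dist_a1b2 k l hk hl
    have hdB2A2 : G.dist (Stmt18A.B2 k l hk hl) (Stmt18A.A2 k l hk hl) = k+l+1 := by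
      rw [SimpleGraph.dist_comm]; exact Stmt18A.dist_a2b2 k l hk hl
    have hdB2A3 : G.dist (Stmt18A.B2 k l hk hl) (Stmt18A.A3 k l hk hl) = k+l := by
      rw [SimpleGraph.dist_comm]; exact Stmt18A.dist_a3b2 k l hk hl
    have hdB2B1 : G.dist (Stmt18A.B2 k l hk hl) (Stmt18A.B1 k l hk hl) = l := by
      rw [SimpleGraph.dist_comm]; exact Stmt18A.dist_b1b2 k l hk hl
    have hdB2B2 : G.dist (Stmt18A.B2 k l hk hl) (Stmt18A.B2 k l hk hl) = 0 := SimpleGraph.dist_self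
    have hdB2B3 : G.dist (Stmt18A.B2 k l hk hl) (Stmt18A.B3 k l hk hl) = 1 := Stmt18A.dist_b2b3 k l hk hl
    have hdB2C0 : G.dist (Stmt18A.B2 k l hk hl) (Stmt18A.C0 k l hk hl) = l+1 := Stmt18A.dist_b2c0 k l hk hl
    have hdB3A1 : G.dist (Stmt18A.B3 k l hk hl) (Stmt18A.A1 k l hk hl) = l := by
      rw [SimpleGraph.dist_comm]; exact Stmt18A.dist_a1b3 k l hk hl
    have hdB3A2 : G.dist (Stmt18A.B3 k l hk hl) (Stmt18A.A2 k l hk hl) = k+l := by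
      rw [SimpleGraph.dist_comm]; exact Stmt18A.dist_a2b3 k l hk hl
    have hdB3A3 : G.dist (Stmt18A.B3 k l hk hl) (Stmt18A.A3 k l hk hl) = k+l := by
      rw [SimpleGraph.dist_comm]; exact Stmt18A.dist_a3b3 k l hk hl
    have hdB3B1 : G.dist (Stmt18A.B3 k l hk hl) (Stmt18A.B1 k l hk hl) = l+1 := by
      rw [SimpleGraph.dist_comm]; exact Stmt18A.dist_b1b3 k l hk hl
    have hdB3B2 : G.dist (Stmt18A.B3 k l hk hl) (Stmt18A.B2 k l hk hl) = 1 := by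
      rw [SimpleGraph.dist_comm]; exact Stmt18A.dist_b2b3 k l hk hl
    have hdB3B3 : G.dist (Stmt18A.B3 k l hk hl) (Stmt18A.B3 k l hk hl) = 0 := SimpleGraph.dist_self
    have hdB3C0 : G.dist (Stmt18A.B3 k l hk hl) (Stmt18A.C0 k l hk hl) = l := Stmt18A.dist_b3c0 k l hk hl
    have hdC0A1 : G.dist (Stmt18A.C0 k l hk hl) (Stmt18A.A1 k l hk hl) = 2 := by
      rw [SimpleGraph.dist_comm]; exact Stmt18A.dist_a1c0 k l hk hl
    have hdC0A2 : G.dist (Stmt18A.C0 k l hk hl) (Stmt18A.A2 k l hk hl) = k+1 := by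
      rw [SimpleGraph.dist_comm]; exact Stmt18A.dist_a2c0 k l hk hl
    have hdC0A3 : G.dist (Stmt18A.C0 k l hk hl) (Stmt18A.A3 k l hk hl) = k := by
      rw [SimpleGraph.dist_comm]; exact Stmt18A.dist_a3c0 k l hk hl
    have hdC0B1 : G.dist (Stmt18A.C0 k l hk hl) (Stmt18A.B1 k l hk hl) = 2 := by
      rw [SimpleGraph.dist_comm]; exact Stmt18A.dist_b1c0 k l hk hl
    have hdC0B2 : G.dist (Stmt18A.C0 k l hk hl) (Stmt18A.B2 k l hk hl) = l+1 := by
      rw [SimpleGraph.dist_comm]; exact Stmt18A.dist_b2c0 k l hk hl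
    have hdC0B3 : G.dist (Stmt18A.C0 k l hk hl) (Stmt18A.B3 k l hk hl) = l := by
      rw [SimpleGraph.dist_comm]; exact Stmt18A.dist_b3c0 k l hk hl
    have hdC0C0 : G.dist (Stmt18A.C0 k l hk hl) (Stmt18A.C0 k l hk hl) = 0 := SimpleGraph.dist_self
    simp only [hdA1A1, hdA1A2, hdA1A3, hdA1B1, hdA1B2, hdA1B3, hdA1C0,
      hdA2A1, hdA2A2, hdA2A3, hdA2B1, hdA2B2, hdA2B3, hdA2C0,
      hdA3A1, hdA3A2, hdA3A3, hdA3B1, hdA3B2, hdA3B3, hdA3C0,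
      hdB1A1, hdB1A2, hdB1A3, hdB1B1, hdB1B2, hdB1B3, hdB1C0,
      hdB2A1, hdB2A2, hdB2A3, hdB2B1, hdB2B2, hdB2B3, hdB2C0,
      hdB3A1, hdB3A2, hdB3A3, hdB3B1, hdB3B2, hdB3B3, hdB3C0,
      hdC0A1, hdC0A2, hdC0A3, hdC0B1, hdC0B2, hdC0B3, hdC0C0]
    push_cast
    ring
  · have hk' : (2:ℝ) ≤ (k:ℝ) := by exact_mod_cast hk
    have hl' : (2:ℝ) ≤ (l:ℝ) := by exact_mod_cast hl
    linarith
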